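/- arXiv:2401.02058 — 3 statements merged into one kernel-verified Lean document; each statement's English description precedes it below -/
import Mathlib

section
/- Fix K ≥ 2, λ_W, λ_H > 0, N > 0, n_k > 0, and define g(x) = (n_k/N)·log(1 + (K-1)·exp(-√(K/(K-1))·√(λ_H/λ_W)·√(n_k)·x)) + λ_H·n_k·x for x ≥ 0. If (N/√(n_k))·√(λ_W·λ_H) < √((K-1)/K), then g has a unique minimizer on [0,∞) at x* = √((K-1)/K · λ_W/λ_H · 1/n_k)·log((K-1)·(√(n_k)/(N·√((K-1)/K·λ_W·λ_H)) - 1)) > 0. -/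
set_option maxHeartbeats 1000000


theorem stmt_13 (K : ℕ) (hK : 2 ≤ K) (lW lH N nk : ℝ)
    (hlW : 0 < lW) (hlH : 0 < lH) (hN : 0 < N) (hnk : 0 < nk)
    (g : ℝ → ℝ)
    (hg : ∀ x, g x = (nk / N) * Real.log (1 + ((K : ℝ) - 1) *
        Real.exp (-(Real.sqrt ((K : ℝ) / ((K : ℝ) - 1)) * Real.sqrt (lH / lW)
          * Real.sqrt nk * x))) + lH * nk * x)
    (hcond : (N / Real.sqrt nk) * Real.sqrt (lW * lH) < Real.sqrt (((K : ℝ) - 1) / (K : ℝ)))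
    (xstar : ℝ)
    (hx : xstar = Real.sqrt (((K : ℝ) - 1) / (K : ℝ) * (lW / lH) * (1 / nk)) *
        Real.log (((K : ℝ) - 1) *
          (Real.sqrt nk / (N * Real.sqrt (((K : ℝ) - 1) / (K : ℝ) * (lW * lH))) - 1))) :
    0 < xstar ∧ (∀ x, 0 ≤ x → g xstar ≤ g x) ∧
      (∀ x, 0 ≤ x → x ≠ xstar → g xstar < g x) := by
  have hK2 : (2:ℝ) ≤ (K:ℝ) := by exact_mod_cast hK
  have hK0 : (0:ℝ) < (K:ℝ) := by linarith
  have hc : (0:ℝ) < (K:ℝ) - 1 := by linarith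
  set a : ℝ := Real.sqrt ((K:ℝ)/((K:ℝ)-1)) * Real.sqrt (lH/lW) * Real.sqrt nk with hadef
  have ha : 0 < a := by
    refine mul_pos (mul_pos ?_ ?_) ?_
    · exact Real.sqrt_pos.2 (div_pos hK0 hc)
    · exact Real.sqrt_pos.2 (div_pos hlH hlW)
    · exact Real.sqrt_pos.2 hnk
  have hsq : a^2 = (K:ℝ)/((K:ℝ)-1) * (lH/lW) * nk := by
    rw [hadef, mul_pow, mul_pow, Real.sq_sqrt (le_of_lt (div_pos hK0 hc)),
      Real.sq_sqrt (le_of_lt (div_pos hlH hlW)), Real.sq_sqrt hnk.le]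
  clear_value a
  clear hadef
  -- squared condition
  have hc2 : N^2*(lW*lH)*(K:ℝ) < ((K:ℝ)-1)*nk := by
    have h1 : ((N/Real.sqrt nk)*Real.sqrt (lW*lH))^2 < (Real.sqrt (((K:ℝ)-1)/(K:ℝ)))^2 := by
      apply pow_lt_pow_left₀ hcond (by positivity)
      norm_num
    rw [mul_pow, div_pow, Real.sq_sqrt hnk.le, Real.sq_sqrt (by positivity : (0:ℝ) ≤ lW*lH),
      Real.sq_sqrt (le_of_lt (div_pos hc hK0))] at h1
    rw [div_mul_eq_mul_div, div_lt_div_iff₀ hnk hK0] at h1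
    linarith
  have hKey : lH*N*(K:ℝ) < a*((K:ℝ)-1) := by
    have e1 : (a*((K:ℝ)-1))^2 * lW = (K:ℝ)*((K:ℝ)-1)*lH*nk := by
      rw [mul_pow, hsq]; field_simp
    have h3 : (lH*N*(K:ℝ))^2 * lW < (K:ℝ)*((K:ℝ)-1)*lH*nk := by
      nlinarith [mul_lt_mul_of_pos_right hc2 (mul_pos hlH hK0)]
    have h2 : (lH*N*(K:ℝ))^2 < (a*((K:ℝ)-1))^2 := by
      have := h3.trans_eq e1.symm
      exact lt_of_mul_lt_mul_right this hlW.le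
    exact lt_of_pow_lt_pow_left₀ 2 (by positivity) h2
  have haN : lH*N < a := by nlinarith [hKey, ha]
  have hlN : 0 < lH*N := mul_pos hlH hN
  -- closed form identities
  have hA : Real.sqrt (((K:ℝ)-1)/(K:ℝ) * (lW/lH) * (1/nk)) = 1/a := by
    have h1 : (((K:ℝ)-1)/(K:ℝ) * (lW/lH) * (1/nk)) = (1/a)^2 := by
      have e2 : (1/a)^2 = (a^2)⁻¹ := by
        rw [div_pow, one_pow, one_div]
      rw [e2, hsq]
      field_simp
    rw [h1, Real.sqrt_sq (by positivity)]
  have hT0 : (0:ℝ) < ((K:ℝ)-1)/(K:ℝ)*(lW*lH) := mul_pos (div_pos hc hK0) (mul_pos hlW hlH)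
  have hden0 : 0 < Real.sqrt (((K:ℝ)-1)/(K:ℝ)*(lW*lH)) := Real.sqrt_pos.2 hT0
  have hB : Real.sqrt nk / (N * Real.sqrt (((K:ℝ)-1)/(K:ℝ) * (lW*lH))) = a/(lH*N) := by
    rw [div_eq_div_iff (mul_pos hN hden0).ne' hlN.ne']
    have h2 : (Real.sqrt nk*(lH*N))^2 = (a*(N*Real.sqrt (((K:ℝ)-1)/(K:ℝ)*(lW*lH))))^2 := by
      rw [mul_pow, mul_pow, mul_pow, mul_pow, Real.sq_sqrt hnk.le, Real.sq_sqrt hT0.le, hsq]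
      field_simp
    calc Real.sqrt nk*(lH*N) = Real.sqrt ((Real.sqrt nk*(lH*N))^2) :=
          (Real.sqrt_sq (by positivity)).symm
      _ = Real.sqrt ((a*(N*Real.sqrt (((K:ℝ)-1)/(K:ℝ)*(lW*lH))))^2) := by rw [h2]
      _ = a*(N*Real.sqrt (((K:ℝ)-1)/(K:ℝ)*(lW*lH))) :=
          Real.sqrt_sq (le_of_lt (mul_pos ha (mul_pos hN hden0)))
  have hx' : xstar = 1/a * Real.log (((K:ℝ)-1) * (a/(lH*N) - 1)) := by
    rw [hx, hA, hB]
  have hs : (K:ℝ)/((K:ℝ)-1) < a/(lH*N) := by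
    rw [div_lt_div_iff₀ hc hlN]; nlinarith [hKey]
  have ht : 1 < ((K:ℝ)-1) * (a/(lH*N) - 1) := by
    have h1 := mul_lt_mul_of_pos_left (sub_lt_sub_right hs 1) hc
    have he : ((K:ℝ)-1) * ((K:ℝ)/((K:ℝ)-1) - 1) = 1 := by field_simp; ring
    linarith
  have ht0 : (0:ℝ) < ((K:ℝ)-1)*(a/(lH*N)-1) := by linarith
  have hxpos : 0 < xstar := by
    rw [hx']
    exact mul_pos (by positivity) (Real.log_pos ht)
  have hax : a * xstar = Real.log (((K:ℝ)-1)*(a/(lH*N)-1)) := by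
    rw [hx']; field_simp
  have hE : Real.exp (-(a*xstar)) = 1/(((K:ℝ)-1)*(a/(lH*N)-1)) := by
    rw [hax, Real.exp_neg, Real.exp_log ht0, one_div]
  have hs1 : (1:ℝ) < a/(lH*N) := by
    have : (1:ℝ) < (K:ℝ)/((K:ℝ)-1) := by rw [lt_div_iff₀ hc]; linarith
    linarith
  have hsub : a/(lH*N) - 1 ≠ 0 := ne_of_gt (sub_pos.2 hs1)
  have h7 : ((K:ℝ)-1) * (a - lH*N) = (lH*N) * (((K:ℝ)-1)*(a/(lH*N)-1)) := by
    field_simp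
  have hu : ((K:ℝ)-1) * Real.exp (-(a*xstar)) * (a - lH*N) = lH*N := by
    rw [hE]
    calc ((K:ℝ)-1) * (1/(((K:ℝ)-1) * (a/(lH*N) - 1))) * (a - lH*N)
        = (((K:ℝ)-1) * (a - lH*N)) / (((K:ℝ)-1) * (a/(lH*N) - 1)) := by ring
      _ = (lH*N) * ((((K:ℝ)-1)*(a/(lH*N)-1)) / (((K:ℝ)-1) * (a/(lH*N) - 1))) := by
          rw [h7, mul_div_assoc]
      _ = lH*N := by rw [div_self ht0.ne', mul_one]
  -- derivative
  have hdenpos : ∀ x : ℝ, 0 < 1 + ((K:ℝ)-1)*Real.exp (-(a*x)) := by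
    intro x
    have := mul_pos hc (Real.exp_pos (-(a*x)))
    linarith
  have hder : ∀ x : ℝ, HasDerivAt g
      ((nk/N) * ((((K:ℝ)-1) * (Real.exp (-(a*x)) * -a)) / (1 + ((K:ℝ)-1)*Real.exp (-(a*x))))
        + lH*nk) x := by
    intro x
    have h1 : HasDerivAt (fun y : ℝ => -(a*y)) (-a) x := by
      exact (((hasDerivAt_id' x).const_mul a).neg).congr_deriv (by ring)
    have h2 : HasDerivAt (fun y : ℝ => Real.exp (-(a*y))) (Real.exp (-(a*x)) * -a) x := h1.exp
    have h3 : HasDerivAt (fun y : ℝ => 1 + ((K:ℝ)-1)*Real.exp (-(a*y)))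
        (((K:ℝ)-1) * (Real.exp (-(a*x)) * -a)) x := (h2.const_mul _).const_add 1
    have h4 := (h3.log (hdenpos x).ne').const_mul (nk/N)
    have h5 : HasDerivAt (fun y : ℝ => lH*nk*y) (lH*nk) x := by
      simpa using (hasDerivAt_id x).const_mul (lH*nk)
    have h6 := h4.add h5
    have hgf : g = fun y => (nk/N) * Real.log (1 + ((K:ℝ)-1)*Real.exp (-(a*y))) + lH*nk*y :=
      funext hg
    rw [hgf]
    exact h6
  have heq : ∀ x : ℝ,
      (nk/N) * ((((K:ℝ)-1) * (Real.exp (-(a*x)) * -a)) / (1 + ((K:ℝ)-1)*Real.exp (-(a*x))))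
        + lH*nk
      = (nk/N) * ((lH*N - (a - lH*N)*(((K:ℝ)-1)*Real.exp (-(a*x)))) /
        (1 + ((K:ℝ)-1)*Real.exp (-(a*x)))) := by
    intro x
    have hd := (hdenpos x).ne'
    field_simp
    ring
  have hposD : ∀ x : ℝ, xstar < x →
      0 < (nk/N) * ((lH*N - (a - lH*N)*(((K:ℝ)-1)*Real.exp (-(a*x)))) /
        (1 + ((K:ℝ)-1)*Real.exp (-(a*x)))) := by
    intro x hxx
    have he : Real.exp (-(a*x)) < Real.exp (-(a*xstar)) :=
      Real.exp_lt_exp.2 (neg_lt_neg (mul_lt_mul_of_pos_left hxx ha))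
    have hnum : 0 < lH*N - (a - lH*N)*(((K:ℝ)-1)*Real.exp (-(a*x))) := by
      nlinarith [hu, mul_pos (sub_pos.2 haN) (mul_pos hc (sub_pos.2 he))]
    exact mul_pos (div_pos hnk hN) (div_pos hnum (hdenpos x))
  have hnegD : ∀ x : ℝ, x < xstar →
      (nk/N) * ((lH*N - (a - lH*N)*(((K:ℝ)-1)*Real.exp (-(a*x)))) /
        (1 + ((K:ℝ)-1)*Real.exp (-(a*x)))) < 0 := by
    intro x hxx
    have he : Real.exp (-(a*xstar)) < Real.exp (-(a*x)) :=
      Real.exp_lt_exp.2 (neg_lt_neg (mul_lt_mul_of_pos_left hxx ha))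
    have hnum : lH*N - (a - lH*N)*(((K:ℝ)-1)*Real.exp (-(a*x))) < 0 := by
      nlinarith [hu, mul_pos (sub_pos.2 haN) (mul_pos hc (sub_pos.2 he))]
    exact mul_neg_of_pos_of_neg (div_pos hnk hN) (div_neg_of_neg_of_pos hnum (hdenpos x))
  have hdiff : Differentiable ℝ g := fun x => (hder x).differentiableAt
  have hmono : StrictMonoOn g (Set.Ici xstar) := by
    apply strictMonoOn_of_deriv_pos (convex_Ici _) hdiff.continuous.continuousOn
    intro x hxI
    rw [interior_Ici] at hxI
    rw [(hder x).deriv, heq x]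
    exact hposD x hxI
  have hanti : StrictAntiOn g (Set.Iic xstar) := by
    apply strictAntiOn_of_deriv_neg (convex_Iic _) hdiff.continuous.continuousOn
    intro x hxI
    rw [interior_Iic] at hxI
    rw [(hder x).deriv, heq x]
    exact hnegD x hxI
  have hstrict : ∀ x, 0 ≤ x → x ≠ xstar → g xstar < g x := by
    intro x _ hne
    rcases lt_or_gt_of_ne hne with h | h
    · exact hanti (Set.mem_Iic.2 h.le) (Set.mem_Iic.2 le_rfl) h
    · exact hmono (Set.mem_Ici.2 le_rfl) (Set.mem_Ici.2 h.le) h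
  refine ⟨hxpos, fun x hx0 => ?_, hstrict⟩
  rcases eq_or_ne x xstar with rfl | hne
  · exact le_rfl
  · exact (hstrict x hx0 hne).le
end

section
/- With g as above, if (N/√(n_k))·√(λ_W·λ_H) ≥ √((K-1)/K), then g'(x) > 0 for all x > 0, and hence g is minimized over [0,∞) uniquely at x = 0. -/
theorem stmt_14 (K : ℕ) (hK : 2 ≤ K) (lW lH N nk : ℝ)
    (hlW : 0 < lW) (hlH : 0 < lH) (hN : 0 < N) (hnk : 0 < nk)
    (g : ℝ → ℝ)
    (hg : ∀ x, g x = (nk / N) * Real.log (1 + ((K : ℝ) - 1) *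
        Real.exp (-(Real.sqrt ((K : ℝ) / ((K : ℝ) - 1)) * Real.sqrt (lH / lW)
          * Real.sqrt nk * x))) + lH * nk * x)
    (hcond : Real.sqrt (((K : ℝ) - 1) / (K : ℝ)) ≤ (N / Real.sqrt nk) * Real.sqrt (lW * lH)) :
    (∀ x, 0 < x → 0 < deriv g x) ∧ (∀ x, 0 < x → g 0 < g x) := by
  have hK1 : (1:ℝ) ≤ (K:ℝ) - 1 := by
    have : (2:ℝ) ≤ (K:ℝ) := by exact_mod_cast hK
    linarith
  set a : ℝ := (K:ℝ) - 1 with ha_def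
  have ha : 0 < a := lt_of_lt_of_le one_pos hK1
  have hKpos : (0:ℝ) < (K:ℝ) := by linarith
  set c : ℝ := Real.sqrt ((K:ℝ) / ((K:ℝ) - 1)) * Real.sqrt (lH / lW) * Real.sqrt nk with hc_def
  have hc : 0 < c := by
    apply mul_pos (mul_pos _ _)
    · exact Real.sqrt_pos.mpr hnk
    · exact Real.sqrt_pos.mpr (by positivity)
    · exact Real.sqrt_pos.mpr (by positivity)
  -- combined sqrt form
  have hcsq : c = Real.sqrt (((K:ℝ) / ((K:ℝ) - 1)) * (lH / lW) * nk) := by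
    rw [Real.sqrt_mul (by positivity), Real.sqrt_mul (by positivity)]
  -- squared condition
  have hcond2 : ((K:ℝ) - 1) / (K:ℝ) ≤ (N / Real.sqrt nk * Real.sqrt (lW * lH))^2 := by
    have h := mul_self_le_mul_self (Real.sqrt_nonneg _) hcond
    rw [Real.mul_self_sqrt (by positivity)] at h
    nlinarith [h]
  have hsq : (N / Real.sqrt nk * Real.sqrt (lW * lH))^2 = N^2 / nk * (lW * lH) := by
    rw [mul_pow, div_pow, Real.sq_sqrt hnk.le, Real.sq_sqrt (mul_pos hlW hlH).le]
  rw [hsq] at hcond2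
  -- key: c * a ≤ lH * N * K
  have hkey : c * a ≤ lH * N * (K:ℝ) := by
    have hKm1 : (0:ℝ) < (K:ℝ) - 1 := by linarith
    have h2 : ((K:ℝ) - 1) * nk ≤ N^2 * (lW * lH) * (K:ℝ) := by
      rw [show N^2 / nk * (lW * lH) = N^2 * (lW * lH) / nk from by ring,
        div_le_div_iff₀ hKpos hnk] at hcond2
      exact hcond2
    have hle : ((K:ℝ) / ((K:ℝ) - 1)) * (lH / lW) * nk ≤ (lH * N * (K:ℝ) / a)^2 := by
      rw [div_pow, show ((K:ℝ) / ((K:ℝ) - 1)) * (lH / lW) * nk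
          = ((K:ℝ) * lH * nk) / (((K:ℝ) - 1) * lW) from by
            rw [div_mul_div_comm, div_mul_eq_mul_div],
        div_le_div_iff₀ (by positivity) (by positivity)]
      have h3 := mul_le_mul_of_nonneg_left h2
        (le_of_lt (mul_pos (mul_pos hlH hKpos) hKm1))
      rw [ha_def]
      nlinarith [h3]
    calc c * a ≤ (lH * N * (K:ℝ) / a) * a := by
          apply mul_le_mul_of_nonneg_right _ ha.le
          rw [hcsq]
          calc Real.sqrt (((K:ℝ) / ((K:ℝ) - 1)) * (lH / lW) * nk)
              ≤ Real.sqrt ((lH * N * (K:ℝ) / a)^2) := Real.sqrt_le_sqrt hle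
            _ = lH * N * (K:ℝ) / a := Real.sqrt_sq (by positivity)
      _ = lH * N * (K:ℝ) := by field_simp
  -- derivative
  have hgfun : g = fun x => (nk / N) * Real.log (1 + a * Real.exp (-(c * x))) + lH * nk * x := by
    funext x; rw [hg x]
  have hderiv : ∀ x : ℝ, HasDerivAt g
      ((nk / N) * (a * (Real.exp (-(c * x)) * (-c)) / (1 + a * Real.exp (-(c * x)))) + lH * nk) x := by
    intro x
    rw [hgfun]
    have h1 : HasDerivAt (fun y : ℝ => -(c * y)) (-c) x := by
      have h0 := ((hasDerivAt_id x).const_mul c).neg; rw [mul_one] at h0; exact h0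
    have h2 := h1.exp
    have h3 : HasDerivAt (fun y : ℝ => 1 + a * Real.exp (-(c * y)))
        (a * (Real.exp (-(c * x)) * (-c))) x := by
      simpa using (h2.const_mul a).const_add 1
    have hpos : 0 < 1 + a * Real.exp (-(c * x)) := by positivity
    have h4 := (h3.log (ne_of_gt hpos)).const_mul (nk / N)
    have h5 : HasDerivAt (fun y : ℝ => lH * nk * y) (lH * nk) x := by
      simpa using (hasDerivAt_id x).const_mul (lH * nk)
    exact h4.add h5
  have hDpos : ∀ x : ℝ, 0 < x →
      0 < (nk / N) * (a * (Real.exp (-(c * x)) * (-c)) / (1 + a * Real.exp (-(c * x)))) + lH * nk := by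
    intro x hx
    set e : ℝ := Real.exp (-(c * x)) with he_def
    have he0 : 0 < e := Real.exp_pos _
    have he1 : e < 1 := by
      rw [he_def, Real.exp_lt_one_iff]
      nlinarith [mul_pos hc hx]
    set d : ℝ := 1 + a * e with hd_def
    have hd : 0 < d := by positivity
    have h1a : (1:ℝ) + a = (K:ℝ) := by rw [ha_def]; ring
    have hfrac : a * e / d < a / (1 + a) := by
      rw [div_lt_div_iff₀ hd (by linarith)]
      nlinarith [ha, he1]
    have h6 : c * (a / (1 + a)) ≤ lH * N := by
      rw [h1a, ← mul_div_assoc, div_le_iff₀ hKpos]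
      exact hkey
    have hstep : c * (a * e / d) < lH * N :=
      lt_of_lt_of_le (mul_lt_mul_of_pos_left hfrac hc) h6
    have hNnk : 0 < nk / N := by positivity
    have hmul : (nk / N) * (c * (a * e / d)) < (nk / N) * (lH * N) :=
      mul_lt_mul_of_pos_left hstep hNnk
    have heq : (nk / N) * (lH * N) = lH * nk := by field_simp
    have hrw : (nk / N) * (a * (e * (-c)) / d) = -((nk / N) * (c * (a * e / d))) := by ring
    rw [hrw]
    linarith [hmul, heq.le, heq.ge]
  constructor
  · intro x hx
    rw [(hderiv x).deriv]
    exact hDpos x hx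
  · intro x hx
    have hcont : ContinuousOn g (Set.Icc 0 x) := fun y _ => ((hderiv y).differentiableAt).continuousAt.continuousWithinAt
    have hmono : StrictMonoOn g (Set.Icc 0 x) := by
      apply strictMonoOn_of_deriv_pos (convex_Icc 0 x) hcont
      intro y hy
      rw [interior_Icc] at hy
      rw [(hderiv y).deriv]
      exact hDpos y hy.1
    exact hmono (Set.left_mem_Icc.mpr hx.le) (Set.right_mem_Icc.mpr hx.le) hx
end

section
/- Let L₁(W,H) = g(W·H̄·D) + (λ_W/2)‖W‖_F² + (λ_H/2)·Σ_k n_k‖h_k‖² be a differentiable function of W ∈ ℝ^{K×d} and class-means h_1,...,h_K ∈ ℝ^d (H̄ the class-mean matrix), where g depends on W and H̄ only through the product. At any critical point (∇_W L₁ = 0 and ∇_{H̄} L₁ = 0), one has λ_W·‖W‖_F² = λ_H·Σ_{k=1}^K n_k‖h_k‖². -/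
/-- At a critical point of `L₁(W, H̄) = g(W * H̄) + (λ_W/2)‖W‖_F² + (λ_H/2)∑ₖ n_k‖h_k‖²`,
where `G` is the gradient of `g` with respect to the product `Z = W * H̄`, the two
stationarity conditions give `λ_W ‖W‖_F² = λ_H ∑ₖ n_k ‖h_k‖²`. -/
theorem stmt_17 (K d : ℕ) (lW lH : ℝ) (hlW : 0 < lW) (hlH : 0 < lH)
    (n : Fin K → ℝ) (hn : ∀ k, 0 < n k)
    (W : Matrix (Fin K) (Fin d) ℝ) (Hb : Matrix (Fin d) (Fin K) ℝ)
    (G : Matrix (Fin K) (Fin K) ℝ)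
    (hW : G * Hb.transpose + lW • W = 0)
    (hH : W.transpose * G + lH • (Hb * Matrix.diagonal n) = 0) :
    lW * (∑ i, ∑ j, (W i j) ^ 2) = lH * ∑ k, n k * ∑ i, (Hb i k) ^ 2 := by
  have h1 : G * Hb.transpose = -(lW • W) := by
    linear_combination (norm := abel) hW
  have h2 : W.transpose * G = -(lH • (Hb * Matrix.diagonal n)) := by
    linear_combination (norm := abel) hH
  have key : Matrix.trace (W.transpose * (G * Hb.transpose))
      = Matrix.trace ((W.transpose * G) * Hb.transpose) := by
    rw [Matrix.mul_assoc]
  rw [h1, h2] at key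
  have trW : Matrix.trace (W.transpose * W) = ∑ i, ∑ j, (W i j) ^ 2 := by
    simp only [Matrix.trace, Matrix.diag, Matrix.mul_apply, Matrix.transpose_apply]
    rw [Finset.sum_comm]
    exact Finset.sum_congr rfl fun i _ => Finset.sum_congr rfl fun j _ => by ring
  have trH : Matrix.trace (Hb * Matrix.diagonal n * Hb.transpose)
      = ∑ k, n k * ∑ i, (Hb i k) ^ 2 := by
    simp only [Matrix.trace, Matrix.diag, Matrix.mul_apply, Matrix.transpose_apply,
      Matrix.mul_diagonal]
    rw [Finset.sum_comm]
    refine Finset.sum_congr rfl fun k _ => ?_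
    rw [Finset.mul_sum]
    refine Finset.sum_congr rfl fun i _ => ?_
    simp only [Matrix.diagonal_apply, mul_ite, mul_zero, Finset.sum_ite_eq', Finset.mem_univ, if_true]
    ring
  rw [Matrix.mul_neg, Matrix.trace_neg, Matrix.mul_smul, Matrix.trace_smul,
    Matrix.neg_mul, Matrix.trace_neg, Matrix.smul_mul, Matrix.trace_smul,
    smul_eq_mul, smul_eq_mul, trW, trH] at key
  linarith
end
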